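/- There exists a constant c₀ > 0, depending only on s (in particular not on L), such that for every positive integer L, every m ≥ 1 and every n ≥ 1, if Y₁, …, Y_m are i.i.d. copies of Y^L, then P( Y₁ + ⋯ + Y_m = −n ) < c₀^m / n^{s−1}. -/

import Mathlib

open MeasureTheory ProbabilityTheory
open scoped ENNReal Classical

/-- `WithBot ℤ` is countable; we endow it with the discrete σ-algebra. -/
instance : MeasurableSpace (WithBot ℤ) := ⊤

/-- The backward exploration variable
`Y^L = sup{ i < 0 : the edge ⟨i,j⟩ is open for some j > 0 with j - i > L }`,
with the convention `sup ∅ = -∞ = ⊥`. -/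
noncomputable def backwardExploration {Ω : Type*} (E : ℤ → ℤ → Set Ω) (L : ℕ) (ω : Ω) :
    WithBot ℤ :=
  if (∃ i : ℤ, i < 0 ∧ ∃ j : ℤ, 0 < j ∧ (L : ℤ) < j - i ∧ ω ∈ E i j) then
    ((sSup {i : ℤ | i < 0 ∧ ∃ j : ℤ, 0 < j ∧ (L : ℤ) < j - i ∧ ω ∈ E i j} : ℤ) : WithBot ℤ)
  else ⊥

instance : MeasurableSingletonClass (WithBot ℤ) := ⟨fun _ => MeasurableSpace.measurableSet_top⟩

instance : MeasurableAdd₂ (WithBot ℤ) := ⟨Measurable.of_discrete⟩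

lemma BE.tail_sum_le (s : ℝ) (hs : 2 < s) (k : ℕ) (hk : 1 ≤ k) (F : Finset ℕ) :
    ∑ t ∈ F, ((k : ℝ) + t + 1) ^ (-s) ≤ (k : ℝ) ^ (1 - s) := by
  obtain ⟨N, hN⟩ := F.exists_nat_subset_range
  have hk1 : (1:ℝ) ≤ k := by exact_mod_cast hk
  have hkpos : (0:ℝ) < k := by linarith
  have key : ∀ t : ℕ, ((k:ℝ) + t + 1) ^ (-s)
      ≤ (k:ℝ)^(2-s) * (1/((k:ℝ)+t) - 1/((k:ℝ)+t+1)) := by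
    intro t
    have ht0 : (0:ℝ) ≤ t := Nat.cast_nonneg t
    set a : ℝ := (k:ℝ) + t with ha
    have ha1 : (1:ℝ) ≤ a := by simp only [ha]; linarith
    have hapos : (0:ℝ) < a := by linarith
    have ha2 : (0:ℝ) < a + 1 := by linarith
    have e1 : (a+1) ^ (-s) = (a+1)^(2-s) * (a+1)^(-(2:ℝ)) := by
      rw [← Real.rpow_add ha2]; congr 1; ring
    have b1 : (a+1)^(2-s) ≤ (k:ℝ)^(2-s) := by
      rw [show (2-s) = -(s-2) by ring, Real.rpow_neg ha2.le, Real.rpow_neg hkpos.le]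
      have h1 : (k:ℝ)^(s-2) ≤ (a+1)^(s-2) :=
        Real.rpow_le_rpow hkpos.le (by linarith) (by linarith)
      have h2 : (0:ℝ) < (k:ℝ)^(s-2) := Real.rpow_pos_of_pos hkpos _
      exact inv_anti₀ h2 h1
    have b2 : (a+1)^(-(2:ℝ)) ≤ 1/a - 1/(a+1) := by
      have hd : 1/a - 1/(a+1) = 1/(a*(a+1)) := by field_simp; ring
      rw [hd, Real.rpow_neg ha2.le, show ((2:ℝ)) = ((2:ℕ):ℝ) by norm_num,
        Real.rpow_natCast, one_div]
      have : a*(a+1) ≤ (a+1)^2 := by nlinarith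
      exact inv_anti₀ (by positivity) this
    calc ((k:ℝ) + t + 1) ^ (-s) = (a+1)^(2-s) * (a+1)^(-(2:ℝ)) := e1
      _ ≤ (k:ℝ)^(2-s) * (1/a - 1/(a+1)) := by
          apply mul_le_mul b1 b2 (by positivity) (by positivity)
      _ = (k:ℝ)^(2-s) * (1/((k:ℝ)+t) - 1/((k:ℝ)+t+1)) := rfl
  have tele : ∑ t ∈ Finset.range N, (1/((k:ℝ)+t) - 1/((k:ℝ)+t+1)) = 1/(k:ℝ) - 1/((k:ℝ)+N) := by
    have := Finset.sum_range_sub' (f := fun t : ℕ => 1/((k:ℝ)+t)) N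
    simpa [Nat.cast_add, Nat.cast_one, add_assoc] using this
  calc ∑ t ∈ F, ((k : ℝ) + t + 1) ^ (-s)
      ≤ ∑ t ∈ Finset.range N, ((k : ℝ) + t + 1) ^ (-s) :=
        Finset.sum_le_sum_of_subset_of_nonneg hN (fun t _ _ => by positivity)
    _ ≤ ∑ t ∈ Finset.range N, (k:ℝ)^(2-s) * (1/((k:ℝ)+t) - 1/((k:ℝ)+t+1)) :=
        Finset.sum_le_sum (fun t _ => key t)
    _ = (k:ℝ)^(2-s) * (1/(k:ℝ) - 1/((k:ℝ)+N)) := by rw [← Finset.mul_sum, tele]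
    _ ≤ (k:ℝ)^(2-s) * (1/(k:ℝ)) := by
        apply mul_le_mul_of_nonneg_left _ (by positivity)
        have : (0:ℝ) ≤ 1/((k:ℝ)+N) := by positivity
        linarith
    _ = (k:ℝ) ^ (1-s) := by
        rw [one_div, ← Real.rpow_neg_one (k:ℝ), ← Real.rpow_add hkpos]; congr 1; ring

lemma BE.marginal_bound (s : ℝ) (hs : 2 < s) {Ω : Type*} [MeasurableSpace Ω] (P : Measure Ω)
    (E : ℤ → ℤ → Set Ω)
    (hprob : ∀ i j : ℤ, i < j → P (E i j) = ENNReal.ofReal ((|(i : ℝ) - j|) ^ (-s)))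
    (L : ℕ) (hae : AEMeasurable (backwardExploration E L) P)
    (k : ℕ) (hk : 1 ≤ k) :
    (P.map (backwardExploration E L)) {((-(k:ℤ) : ℤ) : WithBot ℤ)}
      ≤ ENNReal.ofReal ((k:ℝ) ^ (1 - s)) := by
  rw [Measure.map_apply₀ hae (MeasurableSpace.measurableSet_top).nullMeasurableSet]
  have hsub : backwardExploration E L ⁻¹' {((-(k:ℤ) : ℤ) : WithBot ℤ)}
      ⊆ ⋃ t : ℕ, E (-(k:ℤ)) ((t:ℤ)+1) := by
    intro ω hω
    simp only [Set.mem_preimage, Set.mem_singleton_iff, backwardExploration] at hω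
    by_cases hD : (∃ i : ℤ, i < 0 ∧ ∃ j : ℤ, 0 < j ∧ (L : ℤ) < j - i ∧ ω ∈ E i j)
    · rw [if_pos hD] at hω
      have hss : sSup {i : ℤ | i < 0 ∧ ∃ j : ℤ, 0 < j ∧ (L:ℤ) < j - i ∧ ω ∈ E i j} = -(k:ℤ) :=
        WithBot.coe_inj.mp hω
      have hmem : (-(k:ℤ)) ∈ {i : ℤ | i < 0 ∧ ∃ j : ℤ, 0 < j ∧ (L:ℤ) < j - i ∧ ω ∈ E i j} := by
        rw [← hss]
        exact Int.csSup_mem hD ⟨0, fun x hx => le_of_lt hx.1⟩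
      obtain ⟨-, j, hj0, hjL, hωE⟩ := hmem
      refine Set.mem_iUnion.mpr ⟨(j-1).toNat, ?_⟩
      have hj : ((j-1).toNat : ℤ) + 1 = j := by omega
      rwa [hj]
    · rw [if_neg hD] at hω
      exact absurd hω (by simp)
  refine le_trans (measure_mono hsub) (le_trans (measure_iUnion_le _) ?_)
  have heq : ∀ t : ℕ, P (E (-(k:ℤ)) ((t:ℤ)+1)) = ENNReal.ofReal (((k:ℝ)+t+1) ^ (-s)) := by
    intro t
    rw [hprob _ _ (by omega)]
    congr 1
    rw [show ((-(k:ℤ) : ℤ) : ℝ) - (((t:ℤ)+1 : ℤ) : ℝ) = -((k:ℝ)+t+1) by push_cast; ring,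
      abs_neg, abs_of_nonneg (by positivity)]
  simp only [heq]
  rw [ENNReal.tsum_eq_iSup_sum]
  refine iSup_le fun F => ?_
  rw [← ENNReal.ofReal_sum_of_nonneg (fun t _ => by positivity)]
  exact ENNReal.ofReal_le_ofReal (BE.tail_sum_le s hs k hk F)

theorem backwardExploration_sum_bound
    (s : ℝ) (hs : 2 < s)
    {Ω : Type*} [MeasurableSpace Ω] (P : Measure Ω) [IsProbabilityMeasure P]
    (E : ℤ → ℤ → Set Ω)
    (hmeas : ∀ i j : ℤ, MeasurableSet (E i j))
    (hindep : iIndepSet (fun q : {q : ℤ × ℤ // q.1 < q.2} => E q.1.1 q.1.2) P)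
    (hprob : ∀ i j : ℤ, i < j → P (E i j) = ENNReal.ofReal ((|(i : ℝ) - j|) ^ (-s))) :
    ∃ c₀ : ℝ, 0 < c₀ ∧ ∀ L : ℕ, 1 ≤ L → ∀ m : ℕ, 1 ≤ m → ∀ n : ℕ, 1 ≤ n →
      ∀ (Ω' : Type) (_ : MeasurableSpace Ω') (P' : Measure Ω'),
        IsProbabilityMeasure P' →
        ∀ Y : Fin m → Ω' → WithBot ℤ,
          (∀ i, Measurable (Y i)) →
          iIndepFun (m := fun _ : Fin m => (inferInstance : MeasurableSpace (WithBot ℤ))) Y P' →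
          (∀ i, P'.map (Y i) = P.map (backwardExploration E L)) →
          P' {ω' | (∑ i, Y i ω') = ((-(n : ℤ) : ℤ) : WithBot ℤ)}
            < ENNReal.ofReal (c₀ ^ m / (n : ℝ) ^ (s - 1)) := by
  refine ⟨2 * Real.exp s, by positivity, ?_⟩
  intro L hL m hm n hn Ω' mΩ' P' hP' Y hYmeas hYindep hYdist
  haveI := hP'
  set bE := backwardExploration E L with hbEdef
  have hνP : IsProbabilityMeasure (P.map bE) := by
    rw [← hYdist ⟨0, hm⟩]
    exact Measure.isProbabilityMeasure_map (hYmeas _).aemeasurable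
  have hae : AEMeasurable bE P := by
    by_contra h
    have h1 := hνP.measure_univ
    rw [Measure.map_of_not_aemeasurable h] at h1
    simp only [Measure.coe_zero, Pi.zero_apply] at h1
    exact zero_ne_one h1
  set G : Set (WithBot ℤ) := {v | v = ⊥ ∨ ∃ z : ℤ, z < 0 ∧ v = (z : WithBot ℤ)} with hGdef
  have hG : ∀ ω, bE ω ∈ G := by
    intro ω
    by_cases hD : (∃ i : ℤ, i < 0 ∧ ∃ j : ℤ, 0 < j ∧ (L : ℤ) < j - i ∧ ω ∈ E i j)
    · simp only [hbEdef, backwardExploration, if_pos hD, hGdef, Set.mem_setOf_eq]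
      exact Or.inr ⟨_, (Int.csSup_mem hD ⟨0, fun x hx => le_of_lt hx.1⟩).1, rfl⟩
    · simp only [hbEdef, backwardExploration, if_neg hD, hGdef, Set.mem_setOf_eq]
      trivial
  have hnull : ∀ i, P' (Y i ⁻¹' Gᶜ) = 0 := by
    intro i
    rw [← Measure.map_apply (hYmeas i) MeasurableSpace.measurableSet_top, hYdist i,
      Measure.map_apply₀ hae MeasurableSpace.measurableSet_top.nullMeasurableSet]
    have hpre : bE ⁻¹' Gᶜ = ∅ :=
      Set.eq_empty_iff_forall_notMem.mpr (fun ω hω => hω (hG ω))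
    rw [hpre, measure_empty]
  set K : Finset ℕ := (Finset.Icc 1 n).filter (fun k => n ≤ m * k) with hKdef
  set A : Fin m → ℕ → Set Ω' := fun i k => Y i ⁻¹' {((-(k:ℤ) : ℤ) : WithBot ℤ)} with hAdef
  set B : Fin m → ℕ → Set Ω' :=
    fun i k => (∑ j ∈ Finset.univ.erase i, Y j) ⁻¹' {(((k:ℤ) - n : ℤ) : WithBot ℤ)} with hBdef
  set U : Set Ω' := ⋃ i : Fin m, ⋃ k ∈ K, A i k ∩ B i k with hUdef
  -- inclusion
  have hincl : {ω' | (∑ i, Y i ω') = ((-(n : ℤ) : ℤ) : WithBot ℤ)} ⊆ (⋃ i, Y i ⁻¹' Gᶜ) ∪ U := by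
    intro ω' hω'
    simp only [Set.mem_setOf_eq] at hω'
    by_cases hGood : ∀ i, Y i ω' ∈ G
    · right
      have hne : ∀ i, Y i ω' ≠ ⊥ := by
        intro i hbot
        have hb : ∑ j, Y j ω' = (⊥ : WithBot ℤ) :=
          WithBot.sum_eq_bot_iff.mpr ⟨i, Finset.mem_univ i, hbot⟩
        rw [hω'] at hb
        exact WithBot.coe_ne_bot hb
      have hy : ∀ i, ∃ z : ℤ, z < 0 ∧ Y i ω' = (z : WithBot ℤ) := by
        intro i
        rcases hGood i with h | h
        · exact absurd h (hne i)
        · exact h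
      choose y hyneg hyval using hy
      have hsum : ∑ i, y i = -(n:ℤ) := by
        apply WithBot.coe_inj.mp
        rw [WithBot.coe_sum, ← hω']
        exact Finset.sum_congr rfl fun i _ => (hyval i).symm
      obtain ⟨i₀, -, hmin⟩ := Finset.exists_min_image Finset.univ y ⟨⟨0, hm⟩, Finset.mem_univ _⟩
      set k : ℕ := (-(y i₀)).toNat with hkdef
      have hki : (k:ℤ) = -(y i₀) := Int.toNat_of_nonneg (by linarith [hyneg i₀])
      have hsum_le : (m:ℤ) * y i₀ ≤ ∑ i, y i := by
        have h := Finset.card_nsmul_le_sum Finset.univ y (y i₀)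
          (fun i _ => hmin i (Finset.mem_univ i))
        simpa [Finset.card_univ, nsmul_eq_mul] using h
      have hsplit : y i₀ + ∑ j ∈ Finset.univ.erase i₀, y j = ∑ i, y i :=
        Finset.add_sum_erase _ y (Finset.mem_univ i₀)
      have hothers : ∑ j ∈ Finset.univ.erase i₀, y j ≤ 0 :=
        Finset.sum_nonpos fun j _ => le_of_lt (hyneg j)
      have hkZ_lb : (n:ℤ) ≤ (m:ℤ) * (k:ℤ) := by
        rw [hsum] at hsum_le
        rw [hki]
        nlinarith [hsum_le]
      have hk_lb : n ≤ m * k := by exact_mod_cast hkZ_lb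
      have hk1 : 1 ≤ k := by
        rcases Nat.eq_zero_or_pos k with h0 | h
        · rw [h0, Nat.mul_zero] at hk_lb; omega
        · exact h
      have hk_ub : k ≤ n := by
        have hyi : -(n:ℤ) ≤ y i₀ := by
          rw [hsum] at hsplit; linarith
        have : (k:ℤ) ≤ (n:ℤ) := by rw [hki]; linarith
        exact_mod_cast this
      have hkK : k ∈ K := Finset.mem_filter.mpr ⟨Finset.mem_Icc.mpr ⟨hk1, hk_ub⟩, hk_lb⟩
      refine Set.mem_iUnion.mpr ⟨i₀, Set.mem_biUnion hkK ⟨?_, ?_⟩⟩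
      · simp only [hAdef, Set.mem_preimage, Set.mem_singleton_iff]
        rw [hyval i₀, show y i₀ = -(k:ℤ) by omega]
      · simp only [hBdef, Set.mem_preimage, Set.mem_singleton_iff]
        have happ : (∑ j ∈ Finset.univ.erase i₀, Y j) ω'
            = ∑ j ∈ Finset.univ.erase i₀, Y j ω' := Finset.sum_apply _ _ _
        rw [happ, show (∑ j ∈ Finset.univ.erase i₀, Y j ω')
            = ((∑ j ∈ Finset.univ.erase i₀, y j : ℤ) : WithBot ℤ) by
          rw [WithBot.coe_sum]; exact Finset.sum_congr rfl fun j _ => hyval j]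
        rw [show (∑ j ∈ Finset.univ.erase i₀, y j) = (k:ℤ) - n by
          rw [hsum] at hsplit; linarith]
    · left
      push_neg at hGood
      obtain ⟨i, hi⟩ := hGood
      exact Set.mem_iUnion.mpr ⟨i, hi⟩
  -- measurability of partial sums
  have hTmeas : ∀ i : Fin m, Measurable (∑ j ∈ Finset.univ.erase i, Y j) := by
    intro i
    have hfe : (∑ j ∈ Finset.univ.erase i, Y j)
        = fun ω' => ∑ j ∈ Finset.univ.erase i, Y j ω' := by
      funext ω'; exact Finset.sum_apply _ _ _
    rw [hfe]
    exact Finset.measurable_sum _ (fun j _ => hYmeas j)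
  -- product formula
  have hprod : ∀ (i : Fin m) (k : ℕ), P' (A i k ∩ B i k) = P' (A i k) * P' (B i k) := by
    intro i k
    have hind : IndepFun (Y i) (∑ j ∈ Finset.univ.erase i, Y j) P' :=
      (iIndepFun.indepFun_finsetSum_of_notMem hYindep hYmeas (Finset.notMem_erase i Finset.univ)).symm
    simp only [hAdef, hBdef]
    exact hind.measure_inter_preimage_eq_mul _ _
      MeasurableSpace.measurableSet_top MeasurableSpace.measurableSet_top
  -- marginal bound
  have hs1 : (0:ℝ) < s - 1 := by linarith
  have hmr : (0:ℝ) < m := by exact_mod_cast hm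
  have hnr : (0:ℝ) < n := by exact_mod_cast hn
  have hAval : ∀ (i : Fin m) (k : ℕ), k ∈ K →
      P' (A i k) ≤ ENNReal.ofReal ((m:ℝ)^(s-1) * (n:ℝ)^(1-s)) := by
    intro i k hkK
    obtain ⟨hk1n, hkmul⟩ := Finset.mem_filter.mp hkK
    obtain ⟨hk1, hkn⟩ := Finset.mem_Icc.mp hk1n
    have hbase : P' (A i k) ≤ ENNReal.ofReal ((k:ℝ) ^ (1-s)) := by
      simp only [hAdef]
      rw [← Measure.map_apply (hYmeas i) MeasurableSpace.measurableSet_top, hYdist i]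
      exact BE.marginal_bound s hs P E hprob L hae k hk1
    refine hbase.trans (ENNReal.ofReal_le_ofReal ?_)
    have hkr : (0:ℝ) < k := by exact_mod_cast hk1
    have h1 : (n:ℝ)^(s-1) ≤ ((m:ℝ)*(k:ℝ))^(s-1) :=
      Real.rpow_le_rpow hnr.le (by exact_mod_cast hkmul) hs1.le
    rw [Real.mul_rpow hmr.le hkr.le] at h1
    have h2 : ((m:ℝ)^(s-1) * (k:ℝ)^(s-1))⁻¹ ≤ ((n:ℝ)^(s-1))⁻¹ :=
      inv_anti₀ (by positivity) h1
    rw [show (1-s) = -(s-1) by ring, Real.rpow_neg hkr.le, Real.rpow_neg hnr.le]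
    calc ((k:ℝ)^(s-1))⁻¹ = (m:ℝ)^(s-1) * ((m:ℝ)^(s-1) * (k:ℝ)^(s-1))⁻¹ := by
          rw [mul_inv, ← mul_assoc, mul_inv_cancel₀ (by positivity), one_mul]
      _ ≤ (m:ℝ)^(s-1) * ((n:ℝ)^(s-1))⁻¹ :=
          mul_le_mul_of_nonneg_left h2 (by positivity)
  -- disjointness sum
  have hBsum : ∀ i : Fin m, ∑ k ∈ K, P' (B i k) ≤ 1 := by
    intro i
    have hdisj : (K : Set ℕ).PairwiseDisjoint (B i) := by
      intro k _ l _ hkl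
      refine Set.disjoint_left.mpr fun ω' h1 h2 => hkl ?_
      simp only [hBdef, Set.mem_preimage, Set.mem_singleton_iff] at h1 h2
      have := WithBot.coe_inj.mp (h1.symm.trans h2)
      omega
    rw [← measure_biUnion_finset hdisj
      (fun k _ => (hTmeas i) MeasurableSpace.measurableSet_top)]
    exact prob_le_one
  -- main estimate
  set Mb : ℝ := (m:ℝ)^(s-1) * (n:ℝ)^(1-s) with hMbdef
  have hmain : P' {ω' | (∑ i, Y i ω') = ((-(n : ℤ) : ℤ) : WithBot ℤ)}
      ≤ ENNReal.ofReal ((m:ℝ) * Mb) := by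
    calc P' {ω' | (∑ i, Y i ω') = ((-(n : ℤ) : ℤ) : WithBot ℤ)}
        ≤ P' ((⋃ i, Y i ⁻¹' Gᶜ) ∪ U) := measure_mono hincl
      _ ≤ P' (⋃ i, Y i ⁻¹' Gᶜ) + P' U := measure_union_le _ _
      _ = P' U := by rw [measure_iUnion_null (fun i => hnull i), zero_add]
      _ ≤ ∑' i : Fin m, P' (⋃ k ∈ K, A i k ∩ B i k) := measure_iUnion_le _
      _ = ∑ i : Fin m, P' (⋃ k ∈ K, A i k ∩ B i k) := tsum_fintype _
      _ ≤ ∑ i : Fin m, ∑ k ∈ K, P' (A i k ∩ B i k) :=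
          Finset.sum_le_sum (fun i _ => measure_biUnion_finset_le _ _)
      _ ≤ ∑ _i : Fin m, ENNReal.ofReal Mb := by
          refine Finset.sum_le_sum (fun i _ => ?_)
          calc ∑ k ∈ K, P' (A i k ∩ B i k)
              = ∑ k ∈ K, P' (A i k) * P' (B i k) :=
                Finset.sum_congr rfl (fun k _ => hprod i k)
            _ ≤ ∑ k ∈ K, ENNReal.ofReal Mb * P' (B i k) :=
                Finset.sum_le_sum (fun k hk => mul_le_mul_left (hAval i k hk) _)
            _ = ENNReal.ofReal Mb * ∑ k ∈ K, P' (B i k) := by rw [Finset.mul_sum]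
            _ ≤ ENNReal.ofReal Mb * 1 := mul_le_mul_right (hBsum i) _
            _ = ENNReal.ofReal Mb := mul_one _
      _ = (m : ℝ≥0∞) * ENNReal.ofReal Mb := by
          rw [Finset.sum_const, Finset.card_univ, Fintype.card_fin, nsmul_eq_mul]
      _ = ENNReal.ofReal ((m:ℝ) * Mb) := by
          rw [← ENNReal.ofReal_natCast m, ← ENNReal.ofReal_mul (Nat.cast_nonneg m)]
  refine lt_of_le_of_lt hmain ?_
  rw [ENNReal.ofReal_lt_ofReal_iff (by positivity)]
  have hmn : (m:ℝ) * Mb = (m:ℝ)^s / (n:ℝ)^(s-1) := by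
    rw [hMbdef, show (1-s) = -(s-1) by ring, Real.rpow_neg hnr.le, div_eq_mul_inv, ← mul_assoc]
    congr 1
    nth_rewrite 1 [← Real.rpow_one (m:ℝ)]
    rw [← Real.rpow_add hmr]
    congr 1; ring
  rw [hmn]
  have hlt : (m:ℝ)^s < (2*Real.exp s)^m := by
    have h1 : (m:ℝ) ≤ Real.exp ((m:ℝ)-1) := by
      have := Real.add_one_le_exp ((m:ℝ)-1); linarith
    have h2 : (m:ℝ)^s ≤ Real.exp ((m:ℝ)-1) ^ s :=
      Real.rpow_le_rpow (Nat.cast_nonneg m) h1 (by linarith)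
    have h3 : Real.exp ((m:ℝ)-1) ^ s = Real.exp (((m:ℝ)-1)*s) := (Real.exp_mul _ s).symm
    have h4 : Real.exp (((m:ℝ)-1)*s) ≤ Real.exp ((m:ℝ)*s) := by
      apply Real.exp_le_exp.mpr; nlinarith
    have h5 : Real.exp ((m:ℝ)*s) = Real.exp s ^ m := Real.exp_nat_mul s m
    have h6 : Real.exp s ^ m < 2^m * Real.exp s ^ m := by
      have hp : (0:ℝ) < Real.exp s ^ m := pow_pos (Real.exp_pos s) m
      have h2m : (1:ℝ) < 2^m := one_lt_pow₀ one_lt_two (by omega)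
      nlinarith
    calc (m:ℝ)^s ≤ Real.exp s ^ m := by rw [h3] at h2; exact h2.trans (h4.trans_eq h5)
      _ < 2^m * Real.exp s ^ m := h6
      _ = (2*Real.exp s)^m := (mul_pow 2 (Real.exp s) m).symm
  have hc : (0:ℝ) < (n:ℝ)^(s-1) := by positivity
  rw [div_eq_mul_inv, div_eq_mul_inv]
  exact mul_lt_mul_of_pos_right hlt (inv_pos.mpr hc)
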